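/- Let M be a set, X an abelian group, Γ : M → X with Γ(m₀) = 0 for some m₀, and suppose there is g such that Γ_*(M^{g-1}) = Γ_*(M^g). Define P = subgroup generated by Γ(M). Then P is 'finite dimensional in the Roitman sense' in the following abstract form: there exists k (namely k = 2g-2) and a function Γ' : M^k → X (given by Γ'(m₁,...,m_{2g-2}) = ∑_{i ≤ g-1} Γ(m_i) - ∑_{g ≤ i ≤ 2g-2} Γ(m_i)) such that P ⊆ Γ'(M^{2g-2}). -/

import Mathlib

/-- The set of sums of `k` values of `Γ : M → X`. -/
def sumsOf {M X : Type*} [AddCommMonoid X] (Γ : M → X) (k : ℕ) : Set X :=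
  {x | ∃ m : Fin k → M, x = ∑ i, Γ (m i)}

/-- Lemma 1 of the paper in abstract form: if `Γ(m₀) = 0` for some `m₀` and
`Γ_*(M^{g-1}) = Γ_*(M^g)`, then the subgroup generated by the image of `Γ` is
contained in the image of `Γ' : M^{2g-2} → X`,
`Γ'(m, m') = ∑_{i ≤ g-1} Γ(m_i) - ∑_{i ≤ g-1} Γ(m'_i)`:
it is finite dimensional in the Roitman sense. -/
theorem stmt_16 {M X : Type*} [AddCommGroup X] (Γ : M → X)
    (m₀ : M) (hm₀ : Γ m₀ = 0) (g : ℕ) (hg : 1 ≤ g)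
    (hstab : sumsOf Γ (g - 1) = sumsOf Γ g) :
    ∀ x ∈ AddSubgroup.closure (Set.range Γ),
      ∃ m m' : Fin (g - 1) → M, x = ∑ i, Γ (m i) - ∑ i, Γ (m' i) := by
  obtain ⟨g', rfl⟩ : ∃ g', g = g' + 1 := ⟨g - 1, (Nat.succ_pred_eq_of_pos hg).symm⟩
  simp only [Nat.add_sub_cancel] at hstab ⊢
  set A := sumsOf Γ g' with hA
  have h0 : (0 : X) ∈ A := ⟨fun _ => m₀, by simp [hm₀]⟩
  have hadd1 : ∀ x ∈ A, ∀ m : M, x + Γ m ∈ A := by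
    intro x hx m
    rw [hstab]
    obtain ⟨n, rfl⟩ := hx
    exact ⟨Fin.cons m n, by rw [Fin.sum_univ_succ, Fin.cons_zero, add_comm]; simp⟩
  have haddsum : ∀ k : ℕ, ∀ x ∈ A, ∀ n : Fin k → M, x + ∑ i, Γ (n i) ∈ A := by
    intro k
    induction k with
    | zero => intro x hx n; simpa using hx
    | succ k ih =>
      intro x hx n
      rw [Fin.sum_univ_castSucc, ← add_assoc]
      exact hadd1 _ (ih x hx _) _
  have haddA : ∀ x ∈ A, ∀ y ∈ A, x + y ∈ A := by
    rintro x hx y ⟨n, rfl⟩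
    exact haddsum _ x hx n
  have key : ∀ x : X, (∃ a ∈ A, ∃ b ∈ A, x = a - b) →
      ∃ m m' : Fin g' → M, x = ∑ i, Γ (m i) - ∑ i, Γ (m' i) := by
    rintro x ⟨a, ⟨m, rfl⟩, b, ⟨m', rfl⟩, rfl⟩
    exact ⟨m, m', rfl⟩
  intro x hx
  refine key x ?_
  induction hx using AddSubgroup.closure_induction with
  | mem y hy =>
    obtain ⟨m, rfl⟩ := hy
    exact ⟨Γ m, by simpa using hadd1 0 h0 m, 0, h0, by simp⟩
  | zero => exact ⟨0, h0, 0, h0, by simp⟩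
  | add y z _ _ ihy ihz =>
    obtain ⟨a, ha, b, hb, rfl⟩ := ihy
    obtain ⟨c, hc, d, hd, rfl⟩ := ihz
    exact ⟨a + c, haddA a ha c hc, b + d, haddA b hb d hd, by abel⟩
  | neg y _ ih =>
    obtain ⟨a, ha, b, hb, rfl⟩ := ih
    exact ⟨b, hb, a, ha, by abel⟩
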